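/- Under the hypotheses of the previous statement (P of length m, T of length n ≤ 3m/2, k ∈ [0,m], both the length-m prefix and the length-m suffix of T are k-mismatch occurrences of P, d ≥ 2k positive, Q primitive with |Q| ≤ m/(8d), δ_H(P,Q*) ≤ d), the whole text satisfies δ_H(T, Q*) ≤ 3d. -/

import Mathlib

open List

variable {α : Type*}

/-- The fragment S[i..j) of a string (list) S. -/
def frag (S : List α) (i j : ℕ) : List α := (S.drop i).take (j - i)

/-- Q^∞[a..b): the fragment of the infinite repetition of Q from a (incl.) to b (excl.). -/
def repPrefix [Inhabited α] (Q : List α) (a b : ℕ) : List α :=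
  (List.range' a (b - a)).map (fun i => Q.getD (i % Q.length) default)

/-- Hamming distance of two strings of the same length (counted over positions of S). -/
def hamming [DecidableEq α] [Inhabited α] (S T : List α) : ℕ :=
  ((Finset.range S.length).filter
    (fun i => S.getD i default ≠ T.getD i default)).card

/-- δ_H(S, Q*): Hamming distance of S to the length-|S| prefix of Q^∞. -/
def hammingStar [DecidableEq α] [Inhabited α] (S Q : List α) : ℕ :=
  hamming S (repPrefix Q 0 S.length)

/-- Cost structure for Levenshtein distance (removed from Mathlib; restored with its old meaning). -/
structure Levenshtein.Cost (α β δ : Type*) where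
  delete : α → δ
  insert : β → δ
  substitute : α → β → δ

/-- Unit costs, as in the old Mathlib `Levenshtein.defaultCost`. -/
def Levenshtein.defaultCost [DecidableEq α] : Levenshtein.Cost α α ℕ where
  delete _ := 1
  insert _ := 1
  substitute a b := if a = b then 0 else 1

/-- Levenshtein distance with cost `C`, by the recursion old Mathlib proved for `levenshtein`. -/
def levenshtein {β : Type*} (C : Levenshtein.Cost α β ℕ) : List α → List β → ℕ
  | [], ys => (ys.map C.insert).sum
  | x :: xs, [] => C.delete x + levenshtein C xs []
  | x :: xs, y :: ys => min (C.delete x + levenshtein C xs (y :: ys))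
      (min (C.insert y + levenshtein C (x :: xs) ys) (C.substitute x y + levenshtein C xs ys))

/-- Edit (Levenshtein) distance. -/
def editDist [DecidableEq α] (S T : List α) : ℕ :=
  levenshtein Levenshtein.defaultCost S T

/-- A string is primitive if it is nonempty and not a proper power of a string. -/
def Primitive (Q : List α) : Prop :=
  Q ≠ [] ∧ ∀ (U : List α) (t : ℕ), 2 ≤ t → Q ≠ (List.replicate t U).flatten

/-- p is a period of S. -/
def IsPeriod [Inhabited α] (p : ℕ) (S : List α) : Prop :=
  0 < p ∧ ∀ i, i + p < S.length → S.getD i default = S.getD (i + p) default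

/-- per(S): the smallest period of S. -/
noncomputable def per [Inhabited α] (S : List α) : ℕ := sInf {p | IsPeriod p S}

/-- Occ^H_k(P,T): starting positions of k-mismatch occurrences of P in T. -/
def occH [DecidableEq α] [Inhabited α] (k : ℕ) (P T : List α) : Finset ℕ :=
  (Finset.range (T.length - P.length + 1)).filter
    (fun i => hamming P (frag T i (i + P.length)) ≤ k)

/-- Exact occurrences of B in T. -/
def occExact [DecidableEq α] (B T : List α) : Finset ℕ :=
  (Finset.range (T.length + 1)).filter (fun i => frag T i (i + B.length) = B)

/-- Occ^E_k(P,T): starting positions of k-error (edit distance) occurrences of P in T. -/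
def occE [DecidableEq α] (k : ℕ) (P T : List α) : Set ℕ :=
  {i | ∃ j, i ≤ j ∧ j ≤ T.length ∧ editDist P (frag T i j) ≤ k}

/-- δ_E^cyc(S,Q): minimum edit distance of S to any substring of Q^∞. -/
noncomputable def edCyc [DecidableEq α] [Inhabited α] (S Q : List α) : ℕ :=
  sInf {d | ∃ i j, i ≤ j ∧ d = editDist S (repPrefix Q i j)}

/-- δ_E(S,Q*): minimum edit distance of S to a prefix of Q^∞. -/
noncomputable def edStar [DecidableEq α] [Inhabited α] (S Q : List α) : ℕ :=
  sInf {d | ∃ j, d = editDist S (repPrefix Q 0 j)}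

/-- Minimum edit distance of T to a substring of Q^∞ starting at position x. -/
noncomputable def edStarAt [DecidableEq α] [Inhabited α] (T Q : List α) (x : ℕ) : ℕ :=
  sInf {d | ∃ j, x ≤ j ∧ d = editDist T (repPrefix Q x j)}

/-- Minimum edit distance of T to a substring of Q^∞ ending at a position ≡ y (mod |Q|). -/
noncomputable def edEndAt [DecidableEq α] [Inhabited α] (T Q : List α) (y : ℕ) : ℕ :=
  sInf {d | ∃ i j, i ≤ j ∧ j % Q.length = y % Q.length ∧ d = editDist T (repPrefix Q i j)}

/-- Minimum edit distance of L to a substring of Q^∞ ending at a multiple of |Q|. -/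
noncomputable def edEndMul [DecidableEq α] [Inhabited α] (L Q : List α) : ℕ :=
  sInf {d | ∃ i j, i ≤ j * Q.length ∧ d = editDist L (repPrefix Q i (j * Q.length))}

/-- The fragment S[i..j) of S is locked with respect to Q. -/
def Locked [DecidableEq α] [Inhabited α] (S Q : List α) (i j : ℕ) : Prop :=
  (∃ a : ℕ, edCyc (frag S i j) Q = editDist (frag S i j) (repPrefix Q 0 (a * Q.length))) ∨
  (j = S.length ∧ edCyc (frag S i j) Q = edStar (frag S i j) Q) ∨
  (i = 0 ∧ edCyc (frag S i j) Q = edEndMul (frag S i j) Q) ∨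
  (i = 0 ∧ j = S.length)

/-- rot^j(Q): rotation moving the last j (mod |Q|) characters to the front. -/
def rotR (Q : List α) (j : ℕ) : List α := Q.rotate (Q.length - j % Q.length)

/-- |Mis(T,Q*) ∩ [a,b)|. -/
def misCount [DecidableEq α] [Inhabited α] (T Q : List α) (a b : ℕ) : ℕ :=
  ((Finset.Ico a b).filter (fun i => i < T.length ∧
     T.getD i default ≠ Q.getD (i % Q.length) default)).card

/-- μ_j: the total weight of aligned mismatch pairs of P and T against Q^∞ at shift j·|Q|:
a pair (τ = j|Q|+π, π) with π ∈ Mis(P,Q*), τ ∈ Mis(T,Q*) has weight 2 − δ_H(P[π],T[τ]). -/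
def mu [DecidableEq α] [Inhabited α] (P T Q : List α) (j : ℕ) : ℕ :=
  ∑ π ∈ Finset.range P.length,
    if P.getD π default ≠ Q.getD (π % Q.length) default ∧
       j * Q.length + π < T.length ∧
       T.getD (j * Q.length + π) default ≠ Q.getD ((j * Q.length + π) % Q.length) default
    then (if P.getD π default = T.getD (j * Q.length + π) default then 2 else 1)
    else 0


section AuxProof
variable {α : Type*}

lemma getD_repPrefix [Inhabited α] (Q : List α) {L i : ℕ} (h : i < L) :
    (repPrefix Q 0 L).getD i default = Q.getD (i % Q.length) default := by
  have hlen : (repPrefix Q 0 L).length = L := by simp [repPrefix]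
  rw [List.getD_eq_getElem _ _ (by omega)]
  simp [repPrefix, List.getElem_range']

lemma hammingStar_eq [DecidableEq α] [Inhabited α] (S Q : List α) :
    hammingStar S Q = ((Finset.range S.length).filter
      (fun i => S.getD i default ≠ Q.getD (i % Q.length) default)).card := by
  unfold hammingStar hamming
  congr 1
  apply Finset.filter_congr
  intro i hi
  simp only [Finset.mem_range] at hi
  rw [getD_repPrefix Q hi]

lemma getD_frag [Inhabited α] (T : List α) {a l i : ℕ} (hal : a + l ≤ T.length) (hi : i < l) :
    (frag T a (a + l)).getD i default = T.getD (a + i) default := by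
  have h1 : i < (frag T a (a+l)).length := by simp [frag]; omega
  rw [List.getD_eq_getElem _ _ h1, List.getD_eq_getElem _ _ (by omega)]
  simp [frag]

lemma hamming_frag_eq [DecidableEq α] [Inhabited α] (T P : List α) {a l : ℕ}
    (hal : a + l ≤ T.length) (hPl : P.length = l) :
    hamming P (frag T a (a + l)) = ((Finset.range l).filter
      (fun i => P.getD i default ≠ T.getD (a + i) default)).card := by
  unfold hamming
  rw [hPl]
  congr 1
  apply Finset.filter_congr
  intro i hi
  simp only [Finset.mem_range] at hi
  rw [getD_frag T hal hi]

lemma card_filter_le_add {s : Finset ℕ} (p q r : ℕ → Prop)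
    [DecidablePred p] [DecidablePred q] [DecidablePred r]
    (h : ∀ i ∈ s, p i → q i ∨ r i) :
    (s.filter p).card ≤ (s.filter q).card + (s.filter r).card := by
  calc (s.filter p).card ≤ ((s.filter q) ∪ (s.filter r)).card := by
        apply Finset.card_le_card
        intro i hi
        simp only [Finset.mem_filter, Finset.mem_union] at *
        rcases h i hi.1 hi.2 with h' | h' <;> tauto
    _ ≤ _ := Finset.card_union_le _ _

lemma getD_flatten_replicate [Inhabited α] (U : List α) (hU : 0 < U.length) :
    ∀ (t : ℕ) (i : ℕ), i < t * U.length →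
      ((List.replicate t U).flatten).getD i default = U.getD (i % U.length) default := by
  intro t
  induction t with
  | zero => intro i hi; omega
  | succ t ih =>
    intro i hi
    rw [List.replicate_succ, List.flatten_cons]
    by_cases h : i < U.length
    · rw [List.getD_eq_getElem _ _ (by simp; omega), List.getElem_append_left h,
        Nat.mod_eq_of_lt h, List.getD_eq_getElem _ _ h]
    · push_neg at h
      have h1 : i - U.length < t * U.length := by
        rcases Nat.exists_eq_add_of_le h with ⟨j, rfl⟩
        simp [Nat.succ_mul] at hi ⊢; omega
      have h2 := ih (i - U.length) h1
      have hlen : ((List.replicate t U).flatten).length = t * U.length := by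
        simp [List.length_flatten, Nat.mul_comm]
      rw [List.getD_eq_getElem _ _ (by simp [hlen]; omega),
        List.getElem_append_right (by omega)]
      rw [List.getD_eq_getElem _ _ (by omega)] at h2
      have hmod : (i - U.length) % U.length = i % U.length := by
        conv_rhs => rw [← Nat.sub_add_cancel h]
        rw [Nat.add_mod_right]
      rw [hmod, List.getD_eq_getElem _ _ (by have := Nat.mod_lt i hU; omega)] at h2
      rw [List.getD_eq_getElem _ _ (by have := Nat.mod_lt i hU; omega)]
      exact h2

lemma primitive_no_period [Inhabited α] {Q : List α} (hQ : Primitive Q) {r : ℕ}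
    (hr0 : 0 < r) (hrq : r < Q.length)
    (h : ∀ s < Q.length, Q.getD s default = Q.getD ((s + r) % Q.length) default) : False := by
  set q := Q.length with hqdef
  have hq : 0 < q := by omega
  have hstep : ∀ s, Q.getD (s % q) default = Q.getD ((s + r) % q) default := by
    intro s
    have := h (s % q) (Nat.mod_lt s hq)
    have e : (s % q + r) % q = (s + r) % q := Nat.ModEq.add_right r (Nat.mod_modEq s q)
    rwa [e] at this
  have hiter : ∀ (j s : ℕ), Q.getD (s % q) default = Q.getD ((s + j * r) % q) default := by
    intro j
    induction j with
    | zero => simp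
    | succ j ih =>
      intro s
      calc Q.getD (s % q) default = Q.getD ((s + j * r) % q) default := ih s
        _ = Q.getD ((s + j * r + r) % q) default := hstep (s + j * r)
        _ = Q.getD ((s + (j+1) * r) % q) default := by ring_nf
  set g := Nat.gcd r q with hg
  have hg0 : 0 < g := Nat.gcd_pos_of_pos_left q hr0
  have hgq : g ∣ q := Nat.gcd_dvd_right r q
  have hgltq : g < q := lt_of_le_of_lt (Nat.le_of_dvd hq hgq |>.trans (le_refl q) |> fun _ => Nat.gcd_le_left q hr0) hrq
  have hbez : ∃ a : ℕ, (a * r) % q = g % q := by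
    obtain ⟨x, y, hxy⟩ : ∃ x y : ℤ, (g : ℤ) = r * x + q * y :=
      ⟨Nat.gcdA r q, Nat.gcdB r q, Nat.gcd_eq_gcd_ab r q⟩
    refine ⟨((x % q + q) % q).toNat, ?_⟩
    have hq' : (0:ℤ) < q := by exact_mod_cast hq
    have h1 : (0:ℤ) ≤ (x % q + q) % q := Int.emod_nonneg _ (by omega)
    have h2 : ((((x % q + q) % q).toNat : ℤ)) = (x % q + q) % q := Int.toNat_of_nonneg h1
    have e1 : ((x % (q:ℤ) + q) % q) ≡ x [ZMOD (q:ℤ)] := by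
      have e0 : (x % (q:ℤ) + q) % q = x % q := by
        simp [Int.emod_emod_of_dvd]
      show _ % _ = _ % _
      rw [e0, Int.emod_emod_of_dvd _ dvd_rfl]
    have e2 : x * (r:ℤ) ≡ (g:ℤ) [ZMOD (q:ℤ)] := by
      show _ % _ = _ % _
      rw [hxy, mul_comm (r:ℤ) x, Int.add_mul_emod_self_left]
    have e3 : (((x % (q:ℤ) + q) % q) * r) ≡ (g:ℤ) [ZMOD (q:ℤ)] := (e1.mul_right _).trans e2
    have e4 : ((((x % (q:ℤ) + q) % q).toNat * r : ℕ) : ℤ) % q = ((g:ℕ) : ℤ) % q := by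
      push_cast [h2]; exact e3
    exact_mod_cast e4
  obtain ⟨a, ha⟩ := hbez
  have hgstep : ∀ s, Q.getD (s % q) default = Q.getD ((s + g) % q) default := by
    intro s
    have h1 := hiter a s
    have e : (s + a * r) % q = (s + g) % q := Nat.ModEq.add_left s ha
    rwa [e] at h1
  have hgiter : ∀ (j s : ℕ), Q.getD (s % q) default = Q.getD ((s + j * g) % q) default := by
    intro j
    induction j with
    | zero => simp
    | succ j ih =>
      intro s
      calc Q.getD (s % q) default = Q.getD ((s + j * g) % q) default := ih s
        _ = Q.getD ((s + j * g + g) % q) default := hgstep (s + j * g)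
        _ = Q.getD ((s + (j+1) * g) % q) default := by ring_nf
  have hsg : ∀ s < q, Q.getD s default = Q.getD (s % g) default := by
    intro s hs
    have h1 := hgiter (s / g) (s % g)
    have e1 : s % g % q = s % g := Nat.mod_eq_of_lt (lt_trans (Nat.mod_lt s hg0) hgltq)
    have e2 : s % g + s / g * g = s := Nat.mod_add_div' s g
    rw [e1, e2, Nat.mod_eq_of_lt hs] at h1
    exact h1.symm
  set t := q / g with htdef
  have ht : t * g = q := Nat.div_mul_cancel hgq
  have ht2 : 2 ≤ t := by
    rcases Nat.lt_or_ge t 2 with h' | h'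
    · interval_cases t <;> omega
    · exact h'
  set U := Q.take g with hUdef
  have hUlen : U.length = g := by simp [hUdef]; omega
  have hflatlen : ((List.replicate t U).flatten).length = q := by
    simp only [List.length_flatten, List.map_replicate, List.sum_replicate, smul_eq_mul, hUlen]
    omega
  have : Q = (List.replicate t U).flatten := by
    apply List.ext_getElem (by rw [hflatlen])
    intro i h1 h2
    have hiq : i < q := by omega
    have h3 : i < t * U.length := by rw [hUlen]; omega
    have h4 := getD_flatten_replicate U (by omega) t i h3
    rw [List.getD_eq_getElem _ _ h2, hUlen] at h4
    rw [h4]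
    have h5 : i % g < g := Nat.mod_lt i hg0
    have h6 : U.getD (i % g) default = Q.getD (i % g) default := by
      rw [List.getD_eq_getElem _ _ (by omega), List.getD_eq_getElem _ _ (by rw [← hqdef]; omega)]
      simp [hUdef]
    rw [h6, ← hsg i hiq, List.getD_eq_getElem _ _ h1]
  exact hQ.2 U t ht2 this

end AuxProof

/-- in the periodic case, the whole text is close to Q-periodic. -/
theorem periodic_text_close {α : Type*} [DecidableEq α] [Inhabited α]
    (P T Q : List α) (m n k d : ℕ)
    (hP : P.length = m) (hT : T.length = n)
    (hmn : m ≤ n) (hn : 2 * n ≤ 3 * m) (hk : k ≤ m)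
    (hpre : hamming P (frag T 0 m) ≤ k) (hsuf : hamming P (frag T (n - m) n) ≤ k)
    (hd0 : 0 < d) (hd : 2 * k ≤ d)
    (hQ : Primitive Q) (hQlen : 8 * d * Q.length ≤ m)
    (hPQ : hammingStar P Q ≤ d) :
    hammingStar T Q ≤ 3 * d := by
  have hq : 0 < Q.length := List.length_pos_iff.mpr hQ.1
  have hmis_P : ((Finset.range m).filter
      (fun π => P.getD π default ≠ Q.getD (π % Q.length) default)).card ≤ d := by
    rw [hammingStar_eq, hP] at hPQ; exact hPQ
  have hpre' : ((Finset.range m).filter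
      (fun i => P.getD i default ≠ T.getD i default)).card ≤ k := by
    have h0 := hamming_frag_eq T P (a := 0) (l := m) (by omega) hP
    simp only [Nat.zero_add] at h0
    rwa [h0] at hpre
  have hsuf' : ((Finset.range m).filter
      (fun π => P.getD π default ≠ T.getD (n - m + π) default)).card ≤ k := by
    have h0 := hamming_frag_eq T P (a := n - m) (l := m) (by omega) hP
    have e : n - m + m = n := by omega
    rw [e] at h0
    rwa [h0] at hsuf
  have hT1 : ((Finset.range m).filter
      (fun i => T.getD i default ≠ Q.getD (i % Q.length) default)).card ≤ d + k := by
    refine le_trans (card_filter_le_add _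
      (fun i => P.getD i default ≠ Q.getD (i % Q.length) default)
      (fun i => P.getD i default ≠ T.getD i default) ?_)
      (add_le_add hmis_P hpre')
    intro i _ hne
    by_cases h1 : P.getD i default = Q.getD (i % Q.length) default
    · right; intro h2; exact hne (h2 ▸ h1)
    · left; exact h1
  have hT2 : ((Finset.range m).filter
      (fun π => T.getD (n - m + π) default ≠ Q.getD (π % Q.length) default)).card ≤ d + k := by
    refine le_trans (card_filter_le_add _
      (fun π => P.getD π default ≠ Q.getD (π % Q.length) default)
      (fun π => P.getD π default ≠ T.getD (n - m + π) default) ?_)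
      (add_le_add hmis_P hsuf')
    intro π _ hne
    by_cases h1 : P.getD π default = Q.getD (π % Q.length) default
    · right; intro h2; exact hne (h2 ▸ h1)
    · left; exact h1
  have hov : 4 * d * Q.length ≤ 2 * m - n := by
    have h8 : 8 * (d * Q.length) ≤ m := by rw [← mul_assoc]; exact hQlen
    have h4 : 4 * (d * Q.length) = 4 * d * Q.length := by ring
    set x := d * Q.length with hx
    omega
  have hshift : (n - m) % Q.length = 0 := by
    by_contra hr
    set r := (n - m) % Q.length with hrdef
    have hr0 : 0 < r := Nat.pos_of_ne_zero hr
    have hrq : r < Q.length := Nat.mod_lt _ hq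
    have hwit : ∃ s < Q.length, Q.getD s default ≠ Q.getD ((s + r) % Q.length) default := by
      by_contra hno
      push_neg at hno
      exact primitive_no_period hQ hr0 hrq (fun s hs => hno s hs)
    obtain ⟨s, hsq, hsne⟩ := hwit
    set L := 2 * m - n with hL
    set D := (Finset.range L).filter
      (fun π => Q.getD (π % Q.length) default ≠ Q.getD ((n - m + π) % Q.length) default) with hD
    have hup : D.card ≤ (d + k) + (d + k) := by
      refine le_trans (card_filter_le_add _
        (fun π => T.getD (n - m + π) default ≠ Q.getD ((n - m + π) % Q.length) default)
        (fun π => T.getD (n - m + π) default ≠ Q.getD (π % Q.length) default) ?_)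
        (add_le_add ?_ ?_)
      · intro π _ hne
        by_cases h1 : T.getD (n - m + π) default = Q.getD ((n - m + π) % Q.length) default
        · right; intro h2; exact hne (by rw [← h2, h1])
        · left; exact h1
      · refine le_trans ?_ hT1
        apply Finset.card_le_card_of_injOn (fun π => n - m + π)
        · intro π hπ
          simp only [Finset.mem_coe, Finset.mem_filter, Finset.mem_range] at *
          exact ⟨by omega, hπ.2⟩
        · intro a _ b _ hab
          simp only at hab
          omega
      · refine le_trans (Finset.card_le_card
          (Finset.filter_subset_filter _ (Finset.range_subset_range.mpr (by omega)))) hT2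
    have hlow : 4 * d ≤ D.card := by
      have := Finset.card_le_card_of_surjOn (s := D) (t := Finset.range (4 * d))
        (fun π => π / Q.length) ?_
      · simpa using this
      · intro j hj
        simp only [Finset.coe_range, Set.mem_Iio] at hj
        refine ⟨j * Q.length + s, ?_, ?_⟩
        · simp only [hD, Finset.coe_filter, Set.mem_setOf_eq, Finset.mem_range]
          have hbound : j * Q.length + s < L := by
            have h1 : j * Q.length + s < (j + 1) * Q.length := by
              rw [Nat.add_mul, Nat.one_mul]; omega
            have h2 : (j + 1) * Q.length ≤ 4 * d * Q.length :=
              Nat.mul_le_mul_right _ (by omega)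
            omega
          refine ⟨hbound, ?_⟩
          have e1 : (j * Q.length + s) % Q.length = s := by
            rw [Nat.mul_comm j Q.length, Nat.mul_add_mod, Nat.mod_eq_of_lt hsq]
          have e2 : (n - m + (j * Q.length + s)) % Q.length = (s + r) % Q.length := by
            have e3 : n - m + (j * Q.length + s) = (n - m + s) + j * Q.length := by ring
            rw [e3, Nat.add_mul_mod_self_right, Nat.add_mod, ← hrdef,
              Nat.mod_eq_of_lt hsq, Nat.add_comm r s]
          rw [e1, e2]
          exact hsne
        · show (j * Q.length + s) / Q.length = j
          rw [Nat.mul_comm j Q.length, Nat.mul_add_div hq, Nat.div_eq_of_lt hsq]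
          omega
    omega
  rw [hammingStar_eq, hT]
  have hsplitset : Finset.range n = Finset.range m ∪ Finset.Ico m n := by
    rw [Finset.range_eq_Ico, Finset.range_eq_Ico]
    exact (Finset.Ico_union_Ico_eq_Ico (Nat.zero_le m) hmn).symm
  rw [hsplitset, Finset.filter_union]
  refine le_trans (Finset.card_union_le _ _) ?_
  have hpart2 : ((Finset.Ico m n).filter
      (fun i => T.getD i default ≠ Q.getD (i % Q.length) default)).card ≤ d + k := by
    refine le_trans ?_ hT2
    apply Finset.card_le_card_of_injOn (fun i => i - (n - m))
    · intro i hi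
      simp only [Finset.mem_coe, Finset.mem_filter, Finset.mem_Ico, Finset.mem_range] at *
      obtain ⟨⟨h1, h2⟩, h3⟩ := hi
      refine ⟨by omega, ?_⟩
      have e : n - m + (i - (n - m)) = i := by omega
      rw [e]
      have e2 : (i - (n - m)) % Q.length = i % Q.length := by
        conv_rhs => rw [← e]
        rw [Nat.add_mod, hshift]
        simp [Nat.mod_mod_of_dvd]
      rw [e2]
      exact h3
    · intro a ha b hb hab
      simp only [Finset.mem_filter, Finset.mem_Ico, Finset.coe_filter, Set.mem_setOf_eq] at *
      omega
  omega
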